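/- Let G be a finite simple graph without isolated vertices, with minimum degree δ and maximum degree Δ, and let a < 0 be a real number. Then δ^{-2a}·ISD_{-a}(G) ≤ ISD_a(G) ≤ Δ^{-2a}·ISD_{-a}(G), and equality holds in either bound if and only if G is regular. -/

import Mathlib

open Finset Real

/-- The variable inverse sum deg index
`ISD_a(G) = Σ_{uv ∈ E(G)} 1/(d_u^a + d_v^a)`. -/
noncomputable def ISD {V : Type*} [Fintype V] [DecidableEq V] (G : SimpleGraph V)
    [DecidableRel G.Adj] (a : ℝ) : ℝ :=
  ∑ e ∈ G.edgeFinset,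
    Sym2.lift ⟨fun u v => 1 / ((G.degree u : ℝ) ^ a + (G.degree v : ℝ) ^ a),
      fun u v => by simp [add_comm]⟩ e

lemma aux_min {a d x y : ℝ} (ha : a < 0) (hd : 0 < d) (hx : d ≤ x) (hy : d ≤ y) :
    d ^ (-(2 * a)) * (1 / (x ^ (-a) + y ^ (-a))) ≤ 1 / (x ^ a + y ^ a) ∧
    (1 / (x ^ a + y ^ a) = d ^ (-(2 * a)) * (1 / (x ^ (-a) + y ^ (-a))) ↔ x = d ∧ y = d) := by
  have hxp : 0 < x := hd.trans_le hx
  have hyp : 0 < y := hd.trans_le hy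
  have hA : 0 < x ^ a := Real.rpow_pos_of_pos hxp a
  have hB : 0 < y ^ a := Real.rpow_pos_of_pos hyp a
  have hC : 0 < d ^ a := Real.rpow_pos_of_pos hd a
  have hAC : x ^ a ≤ d ^ a := Real.rpow_le_rpow_of_nonpos hd hx ha.le
  have hBC : y ^ a ≤ d ^ a := Real.rpow_le_rpow_of_nonpos hd hy ha.le
  have hxa : x ^ (-a) = (x ^ a)⁻¹ := Real.rpow_neg hxp.le a
  have hya : y ^ (-a) = (y ^ a)⁻¹ := Real.rpow_neg hyp.le a
  have hd2 : d ^ (-(2 * a)) = ((d ^ a) * (d ^ a))⁻¹ := by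
    rw [Real.rpow_neg hd.le, two_mul, Real.rpow_add hd]
  have hABp : 0 < x ^ a + y ^ a := by positivity
  have hE : d ^ (-(2 * a)) * (1 / (x ^ (-a) + y ^ (-a)))
      = (x ^ a * y ^ a) / ((d ^ a * d ^ a) * (x ^ a + y ^ a)) := by
    rw [hd2, hxa, hya]
    field_simp
    ring
  constructor
  · rw [hE, div_le_div_iff₀ (by positivity) hABp]
    nlinarith [mul_le_mul hAC hBC hB.le hC.le]
  · rw [hE, div_eq_div_iff hABp.ne' (by positivity)]
    constructor
    · intro h
      have h3 : d ^ a * d ^ a = x ^ a * y ^ a :=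
        mul_right_cancel₀ hABp.ne' (by linarith)
      have hAeq : x ^ a = d ^ a := by nlinarith
      have hBeq : y ^ a = d ^ a := by nlinarith
      constructor
      · have := congrArg (fun t : ℝ => t ^ a⁻¹) hAeq
        simpa [Real.rpow_rpow_inv hxp.le ha.ne, Real.rpow_rpow_inv hd.le ha.ne] using this
      · have := congrArg (fun t : ℝ => t ^ a⁻¹) hBeq
        simpa [Real.rpow_rpow_inv hyp.le ha.ne, Real.rpow_rpow_inv hd.le ha.ne] using this
    · rintro ⟨rfl, rfl⟩
      ring

lemma aux_max {a D x y : ℝ} (ha : a < 0) (hxp : 0 < x) (hyp : 0 < y)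
    (hx : x ≤ D) (hy : y ≤ D) :
    1 / (x ^ a + y ^ a) ≤ D ^ (-(2 * a)) * (1 / (x ^ (-a) + y ^ (-a))) ∧
    (1 / (x ^ a + y ^ a) = D ^ (-(2 * a)) * (1 / (x ^ (-a) + y ^ (-a))) ↔ x = D ∧ y = D) := by
  have hD : 0 < D := hxp.trans_le hx
  have hA : 0 < x ^ a := Real.rpow_pos_of_pos hxp a
  have hB : 0 < y ^ a := Real.rpow_pos_of_pos hyp a
  have hC : 0 < D ^ a := Real.rpow_pos_of_pos hD a
  have hAC : D ^ a ≤ x ^ a := Real.rpow_le_rpow_of_nonpos hxp hx ha.le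
  have hBC : D ^ a ≤ y ^ a := Real.rpow_le_rpow_of_nonpos hyp hy ha.le
  have hxa : x ^ (-a) = (x ^ a)⁻¹ := Real.rpow_neg hxp.le a
  have hya : y ^ (-a) = (y ^ a)⁻¹ := Real.rpow_neg hyp.le a
  have hd2 : D ^ (-(2 * a)) = ((D ^ a) * (D ^ a))⁻¹ := by
    rw [Real.rpow_neg hD.le, two_mul, Real.rpow_add hD]
  have hABp : 0 < x ^ a + y ^ a := by positivity
  have hE : D ^ (-(2 * a)) * (1 / (x ^ (-a) + y ^ (-a)))
      = (x ^ a * y ^ a) / ((D ^ a * D ^ a) * (x ^ a + y ^ a)) := by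
    rw [hd2, hxa, hya]
    field_simp
    ring
  constructor
  · rw [hE, div_le_div_iff₀ hABp (by positivity)]
    nlinarith [mul_le_mul hAC hBC hC.le hA.le]
  · rw [hE, div_eq_div_iff hABp.ne' (by positivity)]
    constructor
    · intro h
      have h3 : D ^ a * D ^ a = x ^ a * y ^ a :=
        mul_right_cancel₀ hABp.ne' (by linarith)
      have hAeq : x ^ a = D ^ a := by nlinarith
      have hBeq : y ^ a = D ^ a := by nlinarith
      constructor
      · have := congrArg (fun t : ℝ => t ^ a⁻¹) hAeq
        simpa [Real.rpow_rpow_inv hxp.le ha.ne, Real.rpow_rpow_inv hD.le ha.ne] using this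
      · have := congrArg (fun t : ℝ => t ^ a⁻¹) hBeq
        simpa [Real.rpow_rpow_inv hyp.le ha.ne, Real.rpow_rpow_inv hD.le ha.ne] using this
    · rintro ⟨rfl, rfl⟩
      ring

theorem stmt_5 {V : Type*} [Fintype V] [DecidableEq V] [Nonempty V] (G : SimpleGraph V)
    [DecidableRel G.Adj] (hiso : ∀ v : V, 0 < G.degree v) (a : ℝ) (ha : a < 0) :
    (((G.minDegree : ℝ) ^ (-(2 * a)) * ISD G (-a) ≤ ISD G a ∧
      ISD G a ≤ (G.maxDegree : ℝ) ^ (-(2 * a)) * ISD G (-a)) ∧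
    (ISD G a = (G.minDegree : ℝ) ^ (-(2 * a)) * ISD G (-a) ↔ ∃ k, ∀ v : V, G.degree v = k) ∧
    (ISD G a = (G.maxDegree : ℝ) ^ (-(2 * a)) * ISD G (-a) ↔ ∃ k, ∀ v : V, G.degree v = k)) := by
  classical
  obtain ⟨v0, hv0⟩ := G.exists_minimal_degree_vertex
  obtain ⟨v1, hv1⟩ := G.exists_maximal_degree_vertex
  have hδ0 : (0:ℝ) < G.minDegree := by
    have := hiso v0; rw [← hv0] at this; exact_mod_cast this
  have hdle : ∀ u : V, (G.minDegree : ℝ) ≤ G.degree u := fun u => by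
    exact_mod_cast G.minDegree_le_degree u
  have hdge : ∀ u : V, (G.degree u : ℝ) ≤ G.maxDegree := fun u => by
    exact_mod_cast G.degree_le_maxDegree u
  have hdpos : ∀ u : V, (0:ℝ) < G.degree u := fun u => by exact_mod_cast hiso u
  set f : ℝ → Sym2 V → ℝ := fun b =>
    Sym2.lift ⟨fun u v => 1 / ((G.degree u : ℝ) ^ b + (G.degree v : ℝ) ^ b),
      fun u v => by simp [add_comm]⟩ with hf
  have hISD : ∀ b, ISD G b = ∑ e ∈ G.edgeFinset, f b e := fun b => rfl
  have keymin : ∀ e ∈ G.edgeFinset,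
      ((G.minDegree : ℝ) ^ (-(2 * a)) * f (-a) e ≤ f a e ∧
      (f a e = (G.minDegree : ℝ) ^ (-(2 * a)) * f (-a) e ↔
        ∀ w ∈ e, G.degree w = G.minDegree)) := by
    intro e _
    induction e using Sym2.ind with
    | _ u v =>
      have h := aux_min (d := (G.minDegree : ℝ)) ha hδ0 (hdle u) (hdle v)
      simp only [hf, Sym2.lift_mk]
      refine ⟨h.1, h.2.trans ?_⟩
      simp only [Sym2.mem_iff, forall_eq_or_imp, forall_eq]
      constructor
      · rintro ⟨h1, h2⟩; exact ⟨by exact_mod_cast h1, by exact_mod_cast h2⟩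
      · rintro ⟨h1, h2⟩; exact ⟨by exact_mod_cast h1, by exact_mod_cast h2⟩
  have keymax : ∀ e ∈ G.edgeFinset,
      (f a e ≤ (G.maxDegree : ℝ) ^ (-(2 * a)) * f (-a) e ∧
      (f a e = (G.maxDegree : ℝ) ^ (-(2 * a)) * f (-a) e ↔
        ∀ w ∈ e, G.degree w = G.maxDegree)) := by
    intro e _
    induction e using Sym2.ind with
    | _ u v =>
      have h := aux_max (D := (G.maxDegree : ℝ)) ha (hdpos u) (hdpos v) (hdge u) (hdge v)
      simp only [hf, Sym2.lift_mk]
      refine ⟨h.1, h.2.trans ?_⟩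
      simp only [Sym2.mem_iff, forall_eq_or_imp, forall_eq]
      constructor
      · rintro ⟨h1, h2⟩; exact ⟨by exact_mod_cast h1, by exact_mod_cast h2⟩
      · rintro ⟨h1, h2⟩; exact ⟨by exact_mod_cast h1, by exact_mod_cast h2⟩
  have ineq1 : (G.minDegree : ℝ) ^ (-(2 * a)) * ISD G (-a) ≤ ISD G a := by
    rw [hISD a, hISD (-a), Finset.mul_sum]
    exact Finset.sum_le_sum fun e he => (keymin e he).1
  have ineq2 : ISD G a ≤ (G.maxDegree : ℝ) ^ (-(2 * a)) * ISD G (-a) := by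
    rw [hISD a, hISD (-a), Finset.mul_sum]
    exact Finset.sum_le_sum fun e he => (keymax e he).1
  have eq1 : (ISD G a = (G.minDegree : ℝ) ^ (-(2 * a)) * ISD G (-a)) ↔
      ∀ e ∈ G.edgeFinset, (G.minDegree : ℝ) ^ (-(2 * a)) * f (-a) e = f a e := by
    rw [hISD a, hISD (-a), Finset.mul_sum, eq_comm]
    exact Finset.sum_eq_sum_iff_of_le fun e he => (keymin e he).1
  have eq2 : (ISD G a = (G.maxDegree : ℝ) ^ (-(2 * a)) * ISD G (-a)) ↔
      ∀ e ∈ G.edgeFinset, f a e = (G.maxDegree : ℝ) ^ (-(2 * a)) * f (-a) e := by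
    rw [hISD a, hISD (-a), Finset.mul_sum]
    exact Finset.sum_eq_sum_iff_of_le fun e he => (keymax e he).1
  have edge_of_vertex : ∀ v : V, ∃ w, G.Adj v w ∧ s(v, w) ∈ G.edgeFinset := by
    intro v
    obtain ⟨w, hw⟩ := Finset.card_pos.mp (hiso v)
    have hadj : G.Adj v w := (SimpleGraph.mem_neighborFinset G v w).mp hw
    exact ⟨w, hadj, SimpleGraph.mem_edgeFinset.mpr hadj⟩
  refine ⟨⟨ineq1, ineq2⟩, ?_, ?_⟩
  · rw [eq1]
    constructor
    · intro h
      refine ⟨G.minDegree, fun v => ?_⟩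
      obtain ⟨w, _, he⟩ := edge_of_vertex v
      exact ((keymin _ he).2.mp (h _ he).symm) v (Sym2.mem_mk_left v w)
    · rintro ⟨k, hk⟩
      intro e he
      refine ((keymin e he).2.mpr fun w _ => ?_).symm
      rw [hk w, hv0, hk v0]
  · rw [eq2]
    constructor
    · intro h
      refine ⟨G.maxDegree, fun v => ?_⟩
      obtain ⟨w, _, he⟩ := edge_of_vertex v
      exact ((keymax _ he).2.mp (h _ he)) v (Sym2.mem_mk_left v w)
    · rintro ⟨k, hk⟩
      intro e he
      exact (keymax e he).2.mpr fun w _ => by rw [hk w, hv1, hk v1]
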